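/- arXiv:1406.4339 — 2 statements merged into one kernel-verified Lean document; each statement's English description precedes it below -/
import Mathlib

section
/- Define a two-variable polynomial family T by: T([b₁]) = (y^{b₁} − 1)/(y − 1) + x − 1, and for k ≥ 1, T([b₁, …, b_{2k+1}]) = ((x^{b_{2k}} − 1)/(x − 1)) · ((y^{b_{2k+1}} − 1)/(y − 1) + x − 1) · T([b₁, …, b_{2k−1}]) + T([b₁, …, b_{2k−2}, b_{2k−1} + b_{2k+1}]). Then for all odd-length sequences of positive integers [b₁, …, b_{2k+1}], T([b₁, …, b_{2k+1}]) = Σ_{A ⊆ E} ∏_{bᵢ ∈ A} (x^{bᵢ} − 1)/(x − 1) · ∏_{α ∈ f(A)} ((y^{α} − 1)/(y − 1) + x − 1), where E = {b₂, b₄, …, b_{2k}} (indexed by even positions) and f(A) is defined below. -/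
/-- The truncated geometric sum `(x^n − 1)/(x − 1) = 1 + x + ⋯ + x^{n-1}`. -/
def geom {R : Type*} [CommRing R] (x : R) (n : ℕ) : R := ∑ i ∈ Finset.range n, x ^ i

/-- The recursion for the Tutte polynomial of the canonical Tait graph, on the
*reversed* list of denominators: `T'([b₁]) = (y^{b₁}−1)/(y−1) + x − 1` and
`T'([b_{2k+1}, b_{2k}, b_{2k-1}, …]) =
  ((x^{b_{2k}}−1)/(x−1))·((y^{b_{2k+1}}−1)/(y−1)+x−1)·T'([b_{2k-1}, …])
    + T'([b_{2k-1}+b_{2k+1}, …])`. -/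
def Trev {R : Type*} [CommRing R] (x y : R) : List ℕ → R
  | [b] => geom y b + x - 1
  | c :: b :: a :: rest =>
      geom x b * (geom y c + x - 1) * Trev x y (a :: rest) + Trev x y ((a + c) :: rest)
  | _ => 0
termination_by l => l.length

/-- `T([b₁, …, b_{2k+1}])`, defined by the recursion
`T([b₁]) = (y^{b₁}−1)/(y−1) + x − 1`,
`T([b₁, …, b_{2k+1}]) = ((x^{b_{2k}}−1)/(x−1))·((y^{b_{2k+1}}−1)/(y−1)+x−1)·T([b₁, …, b_{2k−1}])
  + T([b₁, …, b_{2k−2}, b_{2k−1}+b_{2k+1}])`. -/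
def Tpoly {R : Type*} [CommRing R] (x y : R) (l : List ℕ) : R := Trev x y l.reverse

/-- The list of blocks into which a set `A ⊆ {1, …, k}` of cut points splits
`{0, 1, …, k}`: each pair `(l, m)` stands for the block `l, l+1, …, m−1`.
(Here a cut point `a ∈ A` encodes the even position `2a`, and `j ∈ {0, …, k}`
encodes the odd position `2j+1`.) -/
def blocks (k : ℕ) (A : Finset ℕ) : List (ℕ × ℕ) :=
  List.zip (0 :: A.sort (· ≤ ·)) (A.sort (· ≤ ·) ++ [k + 1])

/-- `f(A)`: the multiset of block sums of the odd-indexed entries `b₁, b₃, …, b_{2k+1}`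
determined by a set `A` of even positions (encoded by `a ↦ 2a`, `a ∈ A ⊆ {1, …, k}`).
For `A = ∅` it is the single total sum `b₁ + b₃ + ⋯ + b_{2k+1}`. -/
def fSums (k : ℕ) (b : ℕ → ℕ) (A : Finset ℕ) : Multiset ℕ :=
  ((blocks k A).map fun p => ∑ j ∈ Finset.Ico p.1 p.2, b (2 * j + 1) : List ℕ)

/- ### auxiliary machinery -/

def bh (p c : ℕ) (s : List ℕ) : List (ℕ × ℕ) := List.zip (p :: s) (s ++ [c])

lemma bh_nil (p c : ℕ) : bh p c [] = [(p, c)] := rfl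

lemma bh_cons (p c a : ℕ) (s : List ℕ) : bh p c (a :: s) = (p, a) :: bh a c s := rfl

lemma bh_append (c q : ℕ) (s : List ℕ) : ∀ p, bh p c (s ++ [q]) = bh p q s ++ [(q, c)] := by
  induction s with
  | nil => intro p; rfl
  | cons a s ih => intro p; rw [List.cons_append, bh_cons, ih, bh_cons, List.cons_append]

lemma blocks_eq (k : ℕ) (A : Finset ℕ) : blocks k A = bh 0 (k + 1) (A.sort (· ≤ ·)) := rfl

theorem sort_insert_max (a : ℕ) (s : Finset ℕ) (h : ∀ b ∈ s, b < a) :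
    (insert a s).sort (· ≤ ·) = s.sort (· ≤ ·) ++ [a] := by
  have hns : a ∉ s := fun hm => lt_irrefl a (h a hm)
  refine List.Perm.eq_of_pairwise' (Finset.pairwise_sort _ _) ?_ ((Finset.sort_perm_toList _ _).trans
    (((Finset.toList_insert hns).trans ((Finset.sort_perm_toList _ _).symm.cons a)).trans
      (List.perm_append_singleton _ _).symm))
  rw [List.pairwise_append]
  refine ⟨Finset.pairwise_sort _ _, List.pairwise_singleton _ _, ?_⟩
  intro b hb c hc
  simp only [List.mem_singleton] at hc; subst hc
  exact (h b ((Finset.mem_sort (α := ℕ) (· ≤ ·)).1 hb)).le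

lemma prod_bh_update {R : Type*} [CommRing R] (x y : R) (b : ℕ → ℕ) (k : ℕ) (s : List ℕ) :
    ∀ p, p ≤ k → (∀ a ∈ s, a ≤ k) →
    ((bh p (k+2) s).map (fun pr => geom y (∑ j ∈ Finset.Ico pr.1 pr.2, b (2*j+1)) + x - 1)).prod
      = ((bh p (k+1) s).map (fun pr => geom y (∑ j ∈ Finset.Ico pr.1 pr.2,
          Function.update b (2*k+1) (b (2*k+1) + b (2*k+3)) (2*j+1)) + x - 1)).prod := by
  induction s with
  | nil =>
      intro p hp _
      have hsum : (∑ j ∈ Finset.Ico p (k+2), b (2*j+1))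
          = ∑ j ∈ Finset.Ico p (k+1), Function.update b (2*k+1) (b (2*k+1) + b (2*k+3)) (2*j+1) := by
        have h1 : Function.update b (2*k+1) (b (2*k+1) + b (2*k+3)) (2*k+1)
            = b (2*k+1) + b (2*k+3) := Function.update_self _ _ _
        have h2 : ∀ j ∈ Finset.Ico p k, Function.update b (2*k+1) (b (2*k+1) + b (2*k+3)) (2*j+1)
            = b (2*j+1) := by
          intro j hj
          have : j < k := (Finset.mem_Ico.1 hj).2
          exact Function.update_of_ne (by omega) _ _
        rw [Finset.sum_Ico_succ_top (by omega : p ≤ k+1),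
          Finset.sum_Ico_succ_top (by omega : p ≤ k),
          Finset.sum_Ico_succ_top (by omega : p ≤ k), Finset.sum_congr rfl h2, h1]
        have h3 : 2*(k+1)+1 = 2*k+3 := by ring
        rw [h3]
        omega
      rw [bh_nil, bh_nil]
      simp only [List.map_singleton, List.prod_singleton, hsum]
  | cons a s ih =>
      intro p hp hs
      have ha : a ≤ k := hs a List.mem_cons_self
      have hsum2 : (∑ j ∈ Finset.Ico p a,
            Function.update b (2*k+1) (b (2*k+1) + b (2*k+3)) (2*j+1))
          = ∑ j ∈ Finset.Ico p a, b (2*j+1) := by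
        refine Finset.sum_congr rfl fun j hj => ?_
        have : j < a := (Finset.mem_Ico.1 hj).2
        exact Function.update_of_ne (by omega) _ _
      rw [bh_cons, bh_cons]
      simp only [List.map_cons, List.prod_cons, hsum2,
        ih a ha (fun q hq => hs q (List.mem_cons_of_mem _ hq))]

lemma Tpoly_closed_form_aux {R : Type*} [CommRing R] (x y : R) (k : ℕ) : ∀ (b : ℕ → ℕ),
    Tpoly x y ((List.range (2 * k + 1)).map fun i => b (i + 1)) =
      ∑ A ∈ (Finset.Icc 1 k).powerset,
        (∏ a ∈ A, geom x (b (2 * a))) *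
          ((fSums k b A).map fun α => geom y α + x - 1).prod := by
  induction k with
  | zero =>
      intro b
      have hIcc0 : Finset.Icc 1 0 = (∅ : Finset ℕ) := by simp
      rw [hIcc0]
      simp only [Finset.powerset_empty, Finset.sum_singleton, Finset.prod_empty, one_mul]
      have hbk : blocks 0 ∅ = [(0, 1)] := by simp [blocks]
      have hrange1 : List.range 1 = [0] := rfl
      have hIco : ∑ j ∈ Finset.Ico 0 1, b (2*j+1) = b 1 := by simp
      rw [Tpoly, hrange1, fSums, hbk]
      simp only [List.map_singleton, List.reverse_singleton]
      rw [Trev]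
      simp [hIco]
  | succ k ih =>
      intro b
      set b' : ℕ → ℕ := Function.update b (2*k+1) (b (2*k+1) + b (2*k+3)) with hb'
      -- LHS
      have hrange : 2 * (k+1) + 1 = (2*k) + 1 + 1 + 1 := by ring
      have hrev : ((List.range (2 * (k+1) + 1)).map fun i => b (i + 1)).reverse
          = b (2*k+3) :: b (2*k+2) :: b (2*k+1) ::
            ((List.range (2*k)).map fun i => b (i + 1)).reverse := by
        rw [hrange, List.range_succ, List.range_succ, List.range_succ]
        simp only [List.map_append, List.map_singleton, List.reverse_append,
          List.reverse_singleton, List.singleton_append, List.cons_append, List.nil_append]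
      have h1 : b (2*k+1) :: ((List.range (2*k)).map fun i => b (i + 1)).reverse
          = ((List.range (2*k+1)).map fun i => b (i + 1)).reverse := by
        rw [List.range_succ]; simp
      have h2 : (b (2*k+1) + b (2*k+3)) :: ((List.range (2*k)).map fun i => b (i + 1)).reverse
          = ((List.range (2*k+1)).map fun i => b' (i + 1)).reverse := by
        rw [List.range_succ]
        simp only [List.map_append, List.map_singleton, List.reverse_append,
          List.reverse_singleton, List.singleton_append]
        congr 1
        · simp [hb']
        · congr 1
          refine List.map_congr_left fun i hi => ?_
          have hi' : i < 2*k := List.mem_range.1 hi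
          rw [hb']
          exact (Function.update_of_ne (by omega) _ _).symm
      rw [Tpoly, hrev, Trev, h1, h2, ← Tpoly, ← Tpoly, ih b, ih b']
      -- RHS
      have hIcc : Finset.Icc 1 (k+1) = insert (k+1) (Finset.Icc 1 k) := by
        ext a; simp only [Finset.mem_Icc, Finset.mem_insert]; omega
      rw [hIcc, Finset.sum_powerset_insert (by simp)]
      have hterm2 : ∀ A ∈ (Finset.Icc 1 k).powerset,
          (∏ a ∈ A, geom x (b (2 * a))) *
            ((fSums (k+1) b A).map fun α => geom y α + x - 1).prod
          = (∏ a ∈ A, geom x (b' (2 * a))) *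
            ((fSums k b' A).map fun α => geom y α + x - 1).prod := by
        intro A hA
        rw [Finset.mem_powerset] at hA
        have hmem : ∀ a ∈ A, 1 ≤ a ∧ a ≤ k := fun a ha => Finset.mem_Icc.1 (hA ha)
        congr 1
        · refine Finset.prod_congr rfl fun a ha => ?_
          rw [hb', Function.update_of_ne (by have := (hmem a ha).2; omega)]
        · rw [fSums, fSums]
          simp only [blocks_eq, Multiset.map_coe, Multiset.prod_coe, ← List.comp_map]
          have hk2 : k + 1 + 1 = k + 2 := rfl
          rw [hk2]
          have := prod_bh_update x y b k (A.sort (· ≤ ·)) 0 (Nat.zero_le _)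
            (fun a ha => (hmem a ((Finset.mem_sort (α := ℕ) (· ≤ ·)).1 ha)).2)
          exact this
      rw [Finset.sum_congr rfl hterm2]
      have hterm1 : ∀ A ∈ (Finset.Icc 1 k).powerset,
          (∏ a ∈ insert (k+1) A, geom x (b (2 * a))) *
            ((fSums (k+1) b (insert (k+1) A)).map fun α => geom y α + x - 1).prod
          = geom x (b (2*k+2)) * (geom y (b (2*k+3)) + x - 1) *
            ((∏ a ∈ A, geom x (b (2 * a))) *
              ((fSums k b A).map fun α => geom y α + x - 1).prod) := by
        intro A hA
        rw [Finset.mem_powerset] at hA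
        have hmem : ∀ a ∈ A, a < k + 1 := fun a ha => by
          have := Finset.mem_Icc.1 (hA ha); omega
        have hnA : (k+1) ∉ A := fun h => lt_irrefl _ (hmem _ h)
        have hsort : (insert (k+1) A).sort (· ≤ ·) = A.sort (· ≤ ·) ++ [k+1] :=
          sort_insert_max _ _ hmem
        have hblocks : blocks (k+1) (insert (k+1) A) = blocks k A ++ [(k+1, k+2)] := by
          rw [blocks_eq, hsort, bh_append, blocks_eq]
        have hfS : fSums (k+1) b (insert (k+1) A) = fSums k b A + {b (2*k+3)} := by
          rw [fSums, hblocks, List.map_append, fSums]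
          have : (Finset.Ico (k+1) (k+2)) = {k+1} := by
            rw [Nat.Ico_succ_singleton]
          simp only [List.map_singleton, this, Finset.sum_singleton]
          have h23 : 2 * (k+1) + 1 = 2*k+3 := by ring
          rw [h23, ← Multiset.coe_add]
          rfl
        rw [Finset.prod_insert hnA, hfS, Multiset.map_add, Multiset.prod_add]
        have h22 : 2 * (k+1) = 2*k+2 := by ring
        rw [h22]
        simp only [Multiset.map_singleton, Multiset.prod_singleton]
        ring
      rw [Finset.sum_congr rfl hterm1, ← Finset.mul_sum]
      ring


/-- **Closed form for the Tutte polynomial of the canonical Tait graph**: for any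
odd-length sequence of positive integers `[b₁, …, b_{2k+1}]`,
`T([b₁, …, b_{2k+1}]) = Σ_{A ⊆ E} ∏_{bᵢ∈A} (x^{bᵢ}−1)/(x−1) ·
  ∏_{α ∈ f(A)} ((y^α−1)/(y−1) + x − 1)`,
where `E = {b₂, b₄, …, b_{2k}}` (indexed by the even positions `2a`, `a ∈ {1, …, k}`). -/
theorem Tpoly_closed_form {R : Type*} [CommRing R] (x y : R) (k : ℕ) (b : ℕ → ℕ)
    (hb : ∀ i, 1 ≤ i → i ≤ 2 * k + 1 → 1 ≤ b i) :
    Tpoly x y ((List.range (2 * k + 1)).map fun i => b (i + 1)) =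
      ∑ A ∈ (Finset.Icc 1 k).powerset,
        (∏ a ∈ A, geom x (b (2 * a))) *
          ((fSums k b A).map fun α => geom y α + x - 1).prod :=
  Tpoly_closed_form_aux x y k b
end

section
/- With T defined by the recursion T([b₁]) = (y^{b₁} − 1)/(y − 1) + x − 1 and T([b₁, …, b_{2k+1}]) = ((x^{b_{2k}} − 1)/(x − 1))·((y^{b_{2k+1}} − 1)/(y − 1) + x − 1)·T([b₁, …, b_{2k−1}]) + T([b₁, …, b_{2k−2}, b_{2k−1} + b_{2k+1}]), the evaluation of T([b₁, …, b_{2k+1}]) at x = y = 1 (taking (x^b − 1)/(x − 1) → b) equals Σ_{A ⊆ E} ∏_{bᵢ ∈ A} bᵢ · ∏_{α ∈ f(A)} α, where E and f(A) are as in the closed-form theorem. This number is the determinant of the corresponding rational link. -/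
-- sort insert max
lemma sort_insert_max_s8 {A : Finset ℕ} {m : ℕ} (h : ∀ x ∈ A, x < m) :
    (insert m A).sort (· ≤ ·) = A.sort (· ≤ ·) ++ [m] := by
  have hm : m ∉ A := fun hmem => lt_irrefl m (h m hmem)
  refine (fun hp h1 h2 => List.Perm.eq_of_pairwise' (r := (· ≤ ·)) h1 h2 hp) ?_ ?_ ?_
  · have h1 : ((insert m A).sort (· ≤ ·) : Multiset ℕ) = (A.sort (· ≤ ·) ++ [m] : List ℕ) := by
      rw [Finset.sort_eq, Finset.insert_val, Multiset.ndinsert_of_notMem hm]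
      rw [← Finset.sort_eq A (· ≤ ·)]
      rw [show ((Finset.sort A (· ≤ ·) ++ [m] : List ℕ) : Multiset ℕ) = (Finset.sort A (· ≤ ·) : Multiset ℕ) + ([m] : List ℕ) from rfl]
      rw [show (m ::ₘ (Finset.sort A (· ≤ ·) : Multiset ℕ)) = ([m] : List ℕ) + (Finset.sort A (· ≤ ·) : Multiset ℕ) from rfl]
      exact add_comm _ _
    exact Quotient.exact h1
  · exact Finset.pairwise_sort _ _
  · rw [List.pairwise_append]
    refine ⟨Finset.pairwise_sort _ _, List.pairwise_singleton _ _, ?_⟩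
    intro x hx y hy
    simp at hy; subst hy
    exact le_of_lt (h x (Finset.mem_sort (· ≤ ·) |>.mp hx))

lemma key_sum (k : ℕ) (b : ℕ → ℕ) {a : ℕ} (ha : a ≤ k) :
    ∑ j ∈ Finset.Ico a (k+2), b (2*j+1)
      = ∑ j ∈ Finset.Ico a (k+1),
          Function.update b (2*k+1) (b (2*k+1) + b (2*k+3)) (2*j+1) := by
  rw [Finset.sum_Ico_succ_top (by omega : a ≤ k+1), Finset.sum_Ico_succ_top ha,
      Finset.sum_Ico_succ_top ha]
  have h1 : ∀ j ∈ Finset.Ico a k,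
      Function.update b (2*k+1) (b (2*k+1) + b (2*k+3)) (2*j+1) = b (2*j+1) := by
    intro j hj
    simp only [Finset.mem_Ico] at hj
    rw [Function.update_of_ne (by omega)]
  rw [Finset.sum_congr rfl h1]
  have e1 : 2*(k+1)+1 = 2*k+3 := by ring
  have e2 : Function.update b (2*k+1) (b (2*k+1) + b (2*k+3)) (2*k+1)
      = b (2*k+1) + b (2*k+3) := Function.update_self _ _ _
  rw [e1, e2]
  omega

lemma zip_prod_update (k : ℕ) (b : ℕ → ℕ) :
    ∀ (l : List ℕ), (∀ x ∈ l, x ≤ k) → ∀ a, a ≤ k →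
    ((List.zip (a :: l) (l ++ [k + 2])).map fun p => ∑ j ∈ Finset.Ico p.1 p.2, b (2*j+1)).prod
      = ((List.zip (a :: l) (l ++ [k + 1])).map fun p => ∑ j ∈ Finset.Ico p.1 p.2,
          Function.update b (2*k+1) (b (2*k+1) + b (2*k+3)) (2*j+1)).prod := by
  intro l
  induction l with
  | nil =>
    intro _ a ha
    simp only [List.nil_append, List.zip_cons_cons, List.zip_nil_right, List.map_cons,
      List.map_nil, List.prod_cons, List.prod_nil]
    rw [key_sum k b ha]
  | cons x l ih =>
    intro hx a _
    have hxk : x ≤ k := hx x (by simp)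
    simp only [List.cons_append, List.zip_cons_cons, List.map_cons, List.prod_cons]
    rw [ih (fun y hy => hx y (by simp [hy])) x hxk]
    congr 1
    apply Finset.sum_congr rfl
    intro j hj
    simp only [Finset.mem_Ico] at hj
    rw [Function.update_of_ne (by omega)]

lemma blocks_insert (k : ℕ) {A : Finset ℕ} (hA : A ⊆ Finset.Icc 1 k) :
    blocks (k+1) (insert (k+1) A) = blocks k A ++ [(k+1, k+2)] := by
  unfold blocks
  rw [sort_insert_max_s8 (fun x hx => by have := hA hx; simp at this; omega)]
  rw [show (0 :: (A.sort (·≤·) ++ [k+1])) = (0 :: A.sort (·≤·)) ++ [k+1] from rfl]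
  rw [List.zip_append (by simp)]
  simp [Multiset.map_map, Function.comp]

lemma fSums_insert_prod (k : ℕ) {A : Finset ℕ} (hA : A ⊆ Finset.Icc 1 k) (b : ℕ → ℕ) :
    (fSums (k+1) b (insert (k+1) A)).prod = (fSums k b A).prod * b (2*k+3) := by
  unfold fSums
  rw [blocks_insert k hA, List.map_append, Multiset.prod_coe, Multiset.prod_coe,
    List.prod_append]
  congr 1
  simp only [List.map_cons, List.map_nil, List.prod_cons, List.prod_nil, mul_one]
  rw [Nat.Ico_succ_singleton, Finset.sum_singleton,
    show 2*(k+1)+1 = 2*k+3 from by ring]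

lemma fSums_shift_prod (k : ℕ) {A : Finset ℕ} (hA : A ⊆ Finset.Icc 1 k) (b : ℕ → ℕ) :
    (fSums (k+1) b A).prod
      = (fSums k (Function.update b (2*k+1) (b (2*k+1) + b (2*k+3))) A).prod := by
  unfold fSums blocks
  rw [Multiset.prod_coe, Multiset.prod_coe]
  exact zip_prod_update k b (A.sort (· ≤ ·))
    (fun x hx => by
      have := hA ((Finset.mem_sort (· ≤ ·)).mp hx)
      simp at this; omega)
    0 (Nat.zero_le k)

def Nval (k : ℕ) (b : ℕ → ℕ) : ℕ :=
  ∑ A ∈ (Finset.Icc 1 k).powerset, (∏ a ∈ A, b (2*a)) * (fSums k b A).prod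

lemma Nval_succ (k : ℕ) (b : ℕ → ℕ) :
    Nval (k+1) b = b (2*k+2) * b (2*k+3) * Nval k b
      + Nval k (Function.update b (2*k+1) (b (2*k+1) + b (2*k+3))) := by
  unfold Nval
  have hIcc : Finset.Icc 1 (k+1) = insert (k+1) (Finset.Icc 1 k) := by
    ext x; simp; omega
  have hnot : (k+1) ∉ Finset.Icc 1 k := by simp
  rw [hIcc, Finset.sum_powerset_insert hnot]
  rw [add_comm, Finset.mul_sum]
  congr 1
  · apply Finset.sum_congr rfl
    intro A hA
    simp only [Finset.mem_powerset] at hA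
    rw [fSums_insert_prod k hA b]
    rw [Finset.prod_insert (fun h => hnot (hA h))]
    have e : 2*(k+1) = 2*k+2 := by ring
    rw [e]
    ring
  · apply Finset.sum_congr rfl
    intro A hA
    simp only [Finset.mem_powerset] at hA
    rw [fSums_shift_prod k hA b]
    congr 1
    apply Finset.prod_congr rfl
    intro a ha
    have := hA ha
    simp at this
    rw [Function.update_of_ne (by omega)]

lemma geom_one (n : ℕ) : geom (1 : ℤ) n = n := by simp [geom]

lemma range_map_rev_succ (k : ℕ) (b : ℕ → ℕ) :
    ((List.range (2*(k+1)+1)).map fun i => b (i+1)).reverse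
      = b (2*k+3) :: b (2*k+2) :: ((List.range (2*k+1)).map fun i => b (i+1)).reverse := by
  rw [show 2*(k+1)+1 = (2*k+1)+1+1 from by ring, List.range_succ, List.range_succ]
  simp [show 2*k+1+1+1 = 2*k+3 from by ring, show 2*k+1+1 = 2*k+2 from by ring]

lemma range_map_rev_cons (k : ℕ) (b : ℕ → ℕ) :
    ((List.range (2*k+1)).map fun i => b (i+1)).reverse
      = b (2*k+1) :: ((List.range (2*k)).map fun i => b (i+1)).reverse := by
  rw [List.range_succ]
  simp

lemma tail_update (k c : ℕ) (b : ℕ → ℕ) :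
    ((List.range (2*k)).map fun i => Function.update b (2*k+1) c (i+1))
      = (List.range (2*k)).map fun i => b (i+1) := by
  apply List.map_congr_left
  intro i hi
  simp only [List.mem_range] at hi
  rw [Function.update_of_ne (by omega)]

lemma Trev_step (k : ℕ) (b : ℕ → ℕ) :
    Trev (1:ℤ) 1 (((List.range (2*(k+1)+1)).map fun i => b (i+1)).reverse)
      = (b (2*k+2) : ℤ) * (b (2*k+3) : ℤ)
          * Trev 1 1 (((List.range (2*k+1)).map fun i => b (i+1)).reverse)
        + Trev 1 1 (((List.range (2*k+1)).map fun i =>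
            Function.update b (2*k+1) (b (2*k+1) + b (2*k+3)) (i+1)).reverse) := by
  rw [range_map_rev_succ, range_map_rev_cons k b,
    range_map_rev_cons k (Function.update b (2*k+1) (b (2*k+1) + b (2*k+3))),
    tail_update, Function.update_self]
  rw [Trev]
  rw [geom_one, geom_one]
  ring

lemma main_lemma (k : ℕ) : ∀ b : ℕ → ℕ,
    Trev (1:ℤ) 1 (((List.range (2*k+1)).map fun i => b (i+1)).reverse)
      = (Nval k b : ℤ) := by
  induction k with
  | zero =>
    intro b
    have h1 : ((List.range (2*0+1)).map fun i => b (i+1)).reverse = [b 1] := by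
      simp [List.range_succ]
    rw [h1, Trev, geom_one]
    have h2 : Nval 0 b = b 1 := by
      simp [Nval, fSums, blocks]
    rw [h2]
    ring
  | succ k ih =>
    intro b
    rw [Trev_step, ih, ih, Nval_succ]
    push_cast
    ring

/-- **Determinant formula**: the evaluation of `T([b₁, …, b_{2k+1}])` at `x = y = 1`
(where `(x^b−1)/(x−1)` becomes `b`) equals
`Σ_{A ⊆ E} ∏_{bᵢ∈A} bᵢ · ∏_{α∈f(A)} α`; this number is the determinant of the
corresponding rational link. -/
theorem Tpoly_one_one_det (k : ℕ) (b : ℕ → ℕ)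
    (hb : ∀ i, 1 ≤ i → i ≤ 2 * k + 1 → 1 ≤ b i) :
    Tpoly (1 : ℤ) 1 ((List.range (2 * k + 1)).map fun i => b (i + 1)) =
      ∑ A ∈ (Finset.Icc 1 k).powerset,
        (∏ a ∈ A, (b (2 * a) : ℤ)) * ((fSums k b A).map fun α => (α : ℤ)).prod := by
  unfold Tpoly
  rw [main_lemma]
  unfold Nval
  push_cast [Nat.cast_multiset_prod]
  simp [Multiset.map_map, Function.comp]
end
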